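/- Let k ≥ 2 and r ≥ 2 be integers, and let δ be a positive integer satisfying 4(k+1)·exp(−δ/(3k²(k+1))) ≤ 1 and 8(k+1)(r−1)·exp(−δ/(3k²(k+1)))·δ ≤ 1. Then every hypergraph of rank r with minimum degree at least δ admits a (1/k)-majority (k+1)-edge-colouring. -/

import Mathlib

open Finset


private lemma cyl_count {ι κ : Type*} [Fintype ι] [Fintype κ] [Nonempty κ]
    (I : Finset ι) (PA PB : (ι → κ) → Prop)
    (hA : ∀ ω ω' : ι → κ, (∀ t ∈ I, ω t = ω' t) → PA ω → PA ω')
    (hB : ∀ ω ω' : ι → κ, (∀ t ∉ I, ω t = ω' t) → PB ω → PB ω') :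
    Nat.card {ω : ι → κ // PA ω ∧ PB ω} * Nat.card (ι → κ)
      = Nat.card {ω : ι → κ // PA ω} * Nat.card {ω : ι → κ // PB ω} := by
  classical
  obtain ⟨k0⟩ := ‹Nonempty κ›
  set p : ι → Prop := fun t => t ∈ I with hp
  set e := Equiv.piEquivPiSubtypeProd p (fun _ => κ) with he
  set QA : ({t // p t} → κ) → Prop := fun f => PA (e.symm (f, fun _ => k0)) with hQAdef
  set QB : ({t // ¬ p t} → κ) → Prop := fun g => PB (e.symm (fun _ => k0, g)) with hQBdef
  have happ : ∀ (fg : ({t // p t} → κ) × ({t // ¬ p t} → κ)) (t : ι),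
      e.symm fg t = if h : p t then fg.1 ⟨t, h⟩ else fg.2 ⟨t, h⟩ := by
    intro fg t
    simp [he, Equiv.piEquivPiSubtypeProd]
  have hQA : ∀ fg : ({t // p t} → κ) × ({t // ¬ p t} → κ),
      PA (e.symm fg) ↔ QA fg.1 := by
    intro fg
    have hag : ∀ t ∈ I, e.symm fg t = e.symm (fg.1, fun _ => k0) t := by
      intro t ht
      rw [happ, happ]
      simp [hp, ht]
    exact ⟨fun h => hA _ _ hag h, fun h => hA _ _ (fun t ht => (hag t ht).symm) h⟩
  have hQB : ∀ fg : ({t // p t} → κ) × ({t // ¬ p t} → κ),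
      PB (e.symm fg) ↔ QB fg.2 := by
    intro fg
    have hag : ∀ t ∉ I, e.symm fg t = e.symm (fun _ => k0, fg.2) t := by
      intro t ht
      rw [happ, happ]
      simp [hp, ht]
    exact ⟨fun h => hB _ _ hag h, fun h => hB _ _ (fun t ht => (hag t ht).symm) h⟩
  have key : ∀ (RA : ({t // p t} → κ) → Prop) (RB : ({t // ¬ p t} → κ) → Prop)
      (P : (ι → κ) → Prop), (∀ ω, P ω ↔ RA (e ω).1 ∧ RB (e ω).2) →
      Nat.card {ω : ι → κ // P ω}
        = Nat.card {f // RA f} * Nat.card {g // RB g} := by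
    intro RA RB P hiff
    rw [← Nat.card_prod]
    exact Nat.card_congr ((Equiv.subtypeEquiv e (fun ω => hiff ω)).trans
      (Equiv.subtypeProdEquivProd))
  have c1 : Nat.card {ω : ι → κ // PA ω ∧ PB ω}
      = Nat.card {f // QA f} * Nat.card {g // QB g} := by
    apply key
    intro ω
    have h1 := hQA (e ω)
    have h2 := hQB (e ω)
    rw [Equiv.symm_apply_apply] at h1 h2
    rw [← h1, ← h2]
  have c2 : Nat.card {ω : ι → κ // PA ω}
      = Nat.card {f // QA f} * Nat.card ({t // ¬ p t} → κ) := by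
    have := key QA (fun _ => True) PA (by
      intro ω
      have h1 := hQA (e ω)
      rw [Equiv.symm_apply_apply] at h1
      simp [← h1])
    rw [this]
    congr 1
    exact Nat.card_congr (Equiv.subtypeUnivEquiv (fun _ => trivial))
  have c3 : Nat.card {ω : ι → κ // PB ω}
      = Nat.card ({t // p t} → κ) * Nat.card {g // QB g} := by
    have := key (fun _ => True) QB PB (by
      intro ω
      have h2 := hQB (e ω)
      rw [Equiv.symm_apply_apply] at h2
      simp [← h2])
    rw [this]
    congr 1
    exact Nat.card_congr (Equiv.subtypeUnivEquiv (fun _ => trivial))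
  have c4 : Nat.card (ι → κ)
      = Nat.card ({t // p t} → κ) * Nat.card ({t // ¬ p t} → κ) := by
    rw [← Nat.card_prod]
    exact Nat.card_congr e
  rw [c1, c2, c3, c4]
  ring

private theorem LLL_count {ι κ J : Type*} [Fintype ι] [DecidableEq ι] [Fintype κ]
    [Nonempty κ] [DecidableEq κ] [Fintype J] [DecidableEq J]
    (A : J → Finset (ι → κ)) (I : J → Finset ι)
    (hdet : ∀ j (ω ω' : ι → κ), (∀ t ∈ I j, ω t = ω' t) → ω ∈ A j → ω' ∈ A j)
    (x : J → ℝ) (hx0 : ∀ j, 0 ≤ x j) (hx1 : ∀ j, x j < 1)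
    (hP : ∀ j, ((A j).card : ℝ)
        ≤ x j * (∏ l ∈ univ.filter (fun l => l ≠ j ∧ ¬ Disjoint (I l) (I j)), (1 - x l))
          * (Fintype.card (ι → κ) : ℝ)) :
    ∃ ω : ι → κ, ∀ j, ω ∉ A j := by
  classical
  set N : ℝ := (Fintype.card (ι → κ) : ℝ) with hN
  have hNpos : 0 < N := by
    rw [hN]
    exact_mod_cast (Fintype.card_pos : 0 < Fintype.card (ι → κ))
  set C : Finset J → Finset (ι → κ) :=
    fun S => univ.filter (fun ω => ∀ l ∈ S, ω ∉ A l) with hC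
  have hmemC : ∀ (ω : ι → κ) (S : Finset J), ω ∈ C S ↔ ∀ l ∈ S, ω ∉ A l := by
    intro ω S; simp [hC]
  have hCmono : ∀ {S₂ S : Finset J}, S₂ ⊆ S → C S ⊆ C S₂ := by
    intro S₂ S hsub ω hω
    rw [hmemC] at *
    exact fun l hl => hω l (hsub hl)
  have hCinsert : ∀ (l : J) (S : Finset J), C (insert l S) = C S \ A l := by
    intro l S
    ext ω
    simp only [hmemC, mem_sdiff, mem_insert]
    constructor
    · intro h; exact ⟨fun m hm => h m (Or.inr hm), h l (Or.inl rfl)⟩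
    · rintro ⟨h1, h2⟩ m (rfl | hm)
      · exact h2
      · exact h1 m hm
  have hsc : ∀ s : Finset (ι → κ), s.card = Nat.card {ω : ι → κ // ω ∈ s} := by
    intro s
    rw [Nat.card_eq_fintype_card, Fintype.card_coe]
  -- independence
  have hind : ∀ (j : J) (S₂ : Finset J), (∀ l ∈ S₂, Disjoint (I l) (I j)) →
      ((A j ∩ C S₂).card : ℝ) * N = ((A j).card : ℝ) * ((C S₂).card : ℝ) := by
    intro j S₂ hdisj
    have main := cyl_count (I j) (· ∈ A j) (fun ω => ∀ l ∈ S₂, ω ∉ A l)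
      (hdet j)
      (by
        intro ω ω' hag hPB l hl hmem
        refine hPB l hl (hdet l ω' ω ?_ hmem)
        intro t ht
        exact (hag t (fun hIj => (Finset.disjoint_left.mp (hdisj l hl)) ht hIj)).symm)
    have e1 : (A j ∩ C S₂).card
        = Nat.card {ω : ι → κ // (· ∈ A j) ω ∧ (∀ l ∈ S₂, ω ∉ A l)} := by
      rw [hsc]
      exact Nat.card_congr (Equiv.subtypeEquivRight (by
        intro ω; simp [hmemC, Finset.mem_inter]))
    have e2 : (C S₂).card = Nat.card {ω : ι → κ // ∀ l ∈ S₂, ω ∉ A l} := by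
      rw [hsc]
      exact Nat.card_congr (Equiv.subtypeEquivRight (by
        intro ω; simp [hmemC]))
    have e3 : (A j).card = Nat.card {ω : ι → κ // (· ∈ A j) ω} := hsc _
    have e4 : Fintype.card (ι → κ) = Nat.card (ι → κ) :=
      (Nat.card_eq_fintype_card).symm
    have : (A j ∩ C S₂).card * Fintype.card (ι → κ)
        = (A j).card * (C S₂).card := by
      rw [e1, e2, e3, e4]; exact main
    rw [hN]
    exact_mod_cast congrArg (Nat.cast (R := ℝ)) this
  -- main lemma
  have key : ∀ (n : ℕ) (S : Finset J), S.card = n → ∀ j, j ∉ S →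
      ((A j ∩ C S).card : ℝ) ≤ x j * ((C S).card : ℝ) := by
    intro n
    induction n using Nat.strong_induction_on with
    | _ n IH =>
      intro S hS j hj
      set S₁ : Finset J := S.filter (fun l => ¬ Disjoint (I l) (I j)) with hS₁
      set S₂ : Finset J := S.filter (fun l => Disjoint (I l) (I j)) with hS₂
      have hS21 : S₂ ∪ S₁ = S := filter_union_filter_not_eq _ S
      have hdisjS : Disjoint S₂ S₁ := disjoint_filter_filter_not S S _
      have hcard12 : S₂.card + S₁.card = n := by
        rw [← hS, ← hS21, card_union_of_disjoint hdisjS]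
      have peel : ∀ T : Finset J, T ⊆ S₁ →
          (∏ l ∈ T, (1 - x l)) * ((C S₂).card : ℝ) ≤ ((C (S₂ ∪ T)).card : ℝ) := by
        intro T
        induction T using Finset.induction_on with
        | empty => intro _; simp
        | insert l T hlT IH2 =>
          intro hsub
          have hTsub : T ⊆ S₁ := (subset_insert l T).trans hsub
          have hl1 : l ∈ S₁ := hsub (mem_insert_self l T)
          have hTS2 : Disjoint S₂ T :=
            Finset.disjoint_left.mpr (fun a ha hb =>
              Finset.disjoint_left.mp hdisjS ha (hTsub hb))
          have hmlt : (S₂ ∪ T).card < n := by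
            rw [card_union_of_disjoint hTS2]
            have : T.card < S₁.card :=
              card_lt_card ⟨hTsub, fun hss => hlT (hss hl1)⟩
            omega
          have hlnot : l ∉ S₂ ∪ T := by
            rw [mem_union]
            rintro (h | h)
            · exact Finset.disjoint_left.mp hdisjS h hl1
            · exact hlT h
          have hkeyl := IH _ hmlt (S₂ ∪ T) rfl l hlnot
          have hsd : C (S₂ ∪ insert l T) = C (S₂ ∪ T) \ A l := by
            rw [union_insert, hCinsert]
          have hcards : ((C (S₂ ∪ T) \ A l).card : ℝ)
              = ((C (S₂ ∪ T)).card : ℝ) - ((A l ∩ C (S₂ ∪ T)).card : ℝ) := by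
            have h := card_sdiff_add_card_inter (C (S₂ ∪ T)) (A l)
            rw [inter_comm] at h
            have := congrArg (Nat.cast (R := ℝ)) h
            push_cast at this
            linarith
          have hIH2 := IH2 hTsub
          have h1x : (0:ℝ) ≤ 1 - x l := by linarith [hx1 l]
          calc (∏ m ∈ insert l T, (1 - x m)) * ((C S₂).card : ℝ)
              = (1 - x l) * ((∏ m ∈ T, (1 - x m)) * ((C S₂).card : ℝ)) := by
                rw [prod_insert hlT]; ring
            _ ≤ (1 - x l) * ((C (S₂ ∪ T)).card : ℝ) := by
                apply mul_le_mul_of_nonneg_left hIH2 h1x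
            _ = ((C (S₂ ∪ T)).card : ℝ) - x l * ((C (S₂ ∪ T)).card : ℝ) := by ring
            _ ≤ ((C (S₂ ∪ T)).card : ℝ) - ((A l ∩ C (S₂ ∪ T)).card : ℝ) := by
                linarith
            _ = ((C (S₂ ∪ insert l T)).card : ℝ) := by rw [hsd, hcards]
      -- assemble
      have hsubS2 : S₂ ⊆ S := filter_subset _ _
      have h1 : A j ∩ C S ⊆ A j ∩ C S₂ :=
        inter_subset_inter (Finset.Subset.refl _) (hCmono hsubS2)
      have hindj := hind j S₂ (fun l hl => (mem_filter.mp hl).2)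
      have hS1G : S₁ ⊆ univ.filter (fun l => l ≠ j ∧ ¬ Disjoint (I l) (I j)) := by
        intro l hl
        rw [mem_filter] at hl ⊢
        refine ⟨mem_univ _, ?_, hl.2⟩
        rintro rfl
        exact hj hl.1
      have hprodle : (∏ l ∈ univ.filter (fun l => l ≠ j ∧ ¬ Disjoint (I l) (I j)), (1 - x l))
          ≤ ∏ l ∈ S₁, (1 - x l) := by
        rw [← prod_sdiff hS1G]
        have h1 : (∏ l ∈ univ.filter (fun l => l ≠ j ∧ ¬ Disjoint (I l) (I j)) \ S₁,
            (1 - x l)) ≤ 1 :=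
          prod_le_one (fun l _ => by linarith [hx1 l]) (fun l _ => by linarith [hx0 l])
        have h2 : (0:ℝ) ≤ ∏ l ∈ S₁, (1 - x l) :=
          prod_nonneg (fun l _ => by linarith [hx1 l])
        nlinarith
      have hpeel := peel S₁ (Finset.Subset.refl _)
      rw [hS21] at hpeel
      have step : ((A j ∩ C S).card : ℝ) * N ≤ (x j * ((C S).card : ℝ)) * N := by
        calc ((A j ∩ C S).card : ℝ) * N
            ≤ ((A j ∩ C S₂).card : ℝ) * N := by
              have := card_le_card h1
              have : ((A j ∩ C S).card : ℝ) ≤ ((A j ∩ C S₂).card : ℝ) := by exact_mod_cast this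
              nlinarith
          _ = ((A j).card : ℝ) * ((C S₂).card : ℝ) := hindj
          _ ≤ (x j * (∏ l ∈ univ.filter (fun l => l ≠ j ∧ ¬ Disjoint (I l) (I j)), (1 - x l)) * N)
                * ((C S₂).card : ℝ) := by
              apply mul_le_mul_of_nonneg_right (hP j) (by positivity)
          _ = (x j * ((∏ l ∈ univ.filter (fun l => l ≠ j ∧ ¬ Disjoint (I l) (I j)), (1 - x l))
                * ((C S₂).card : ℝ))) * N := by ring
          _ ≤ (x j * ((∏ l ∈ S₁, (1 - x l)) * ((C S₂).card : ℝ))) * N := by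
              have hle : (∏ l ∈ univ.filter (fun l => l ≠ j ∧ ¬ Disjoint (I l) (I j)), (1 - x l))
                  * ((C S₂).card : ℝ) ≤ (∏ l ∈ S₁, (1 - x l)) * ((C S₂).card : ℝ) :=
                mul_le_mul_of_nonneg_right hprodle (by positivity)
              have := mul_le_mul_of_nonneg_left hle (hx0 j)
              nlinarith [hNpos]
          _ ≤ (x j * ((C S).card : ℝ)) * N := by
              have := mul_le_mul_of_nonneg_left hpeel (hx0 j)
              nlinarith [hNpos]
      exact le_of_mul_le_mul_right step hNpos
  -- lower bound on C S
  have lower : ∀ S : Finset J, (∏ l ∈ S, (1 - x l)) * N ≤ ((C S).card : ℝ) := by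
    intro S
    induction S using Finset.induction_on with
    | empty =>
      have : C ∅ = univ := by
        ext ω; simp [hmemC]
      rw [this]
      simp [hN, Finset.card_univ]
    | insert l S hlS IH2 =>
      have hkeyl := key S.card S rfl l hlS
      have hcards : ((C (insert l S)).card : ℝ)
          = ((C S).card : ℝ) - ((A l ∩ C S).card : ℝ) := by
        rw [hCinsert]
        have h := card_sdiff_add_card_inter (C S) (A l)
        rw [inter_comm] at h
        have := congrArg (Nat.cast (R := ℝ)) h
        push_cast at this
        linarith
      have h1x : (0:ℝ) ≤ 1 - x l := by linarith [hx1 l]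
      calc (∏ m ∈ insert l S, (1 - x m)) * N
          = (1 - x l) * ((∏ m ∈ S, (1 - x m)) * N) := by rw [prod_insert hlS]; ring
        _ ≤ (1 - x l) * ((C S).card : ℝ) := mul_le_mul_of_nonneg_left IH2 h1x
        _ = ((C S).card : ℝ) - x l * ((C S).card : ℝ) := by ring
        _ ≤ ((C S).card : ℝ) - ((A l ∩ C S).card : ℝ) := by linarith
        _ = ((C (insert l S)).card : ℝ) := hcards.symm
  have hpos : (0:ℝ) < ((C univ).card : ℝ) := by
    have hprodpos : (0:ℝ) < ∏ l ∈ univ, (1 - x l) :=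
      prod_pos (fun l _ => by linarith [hx1 l])
    calc (0:ℝ) < (∏ l ∈ univ, (1 - x l)) * N := by positivity
      _ ≤ ((C univ).card : ℝ) := lower univ
  have : (C univ).Nonempty := by
    rw [← Finset.card_pos]
    exact_mod_cast hpos
  obtain ⟨ω, hω⟩ := this
  rw [hmemC] at hω
  exact ⟨ω, fun j => hω j (mem_univ j)⟩

private lemma core_ineq (k : ℕ) (hk : 2 ≤ k) :
    ((1 + 1/((k:ℝ)*((k:ℝ)+1)))^k) * Real.exp (1/(3*(k:ℝ)*((k:ℝ)+1)))
      ≤ ((k:ℝ)+1)/(k:ℝ) := by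
  set kr := (k:ℝ) with hkr
  have hk2 : (2:ℝ) ≤ kr := by rw [hkr]; exact_mod_cast hk
  have hkpos : (0:ℝ) < kr := by linarith
  have hKpos : (0:ℝ) < kr*(kr+1) := by positivity
  set y : ℝ := 1/(kr+1) + 1/(3*kr*(kr+1)) with hydef
  have hy : y = (3*kr+1)/(3*kr*(kr+1)) := by
    rw [hydef]; field_simp
  have hy0 : 0 ≤ y := by rw [hydef]; positivity
  have hy1 : y ≤ 1 := by
    rw [hy, div_le_one (by positivity)]
    nlinarith
  -- step 1
  have s1 : (1 + 1/(kr*(kr+1)))^k ≤ Real.exp (1/(kr+1)) := by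
    have h1 : 1 + 1/(kr*(kr+1)) ≤ Real.exp (1/(kr*(kr+1))) := by
      have := Real.add_one_le_exp (1/(kr*(kr+1)))
      linarith
    have h2 : (1 + 1/(kr*(kr+1)))^k ≤ (Real.exp (1/(kr*(kr+1))))^k :=
      pow_le_pow_left₀ (by positivity) h1 k
    have h3 : (Real.exp (1/(kr*(kr+1))))^k = Real.exp ((k:ℝ) * (1/(kr*(kr+1)))) :=
      (Real.exp_nat_mul _ k).symm
    have h4 : (k:ℝ) * (1/(kr*(kr+1))) = 1/(kr+1) := by
      rw [← hkr]; field_simp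
    rw [h3, h4] at h2
    exact h2
  -- step 4 : exp y ≤ 1 + y + y^2/2 + 2/9 y^3
  have s4 : Real.exp y ≤ 1 + y + y^2/2 + (2/9)*y^3 := by
    have hb := Real.exp_bound (x := y) (by rw [abs_of_nonneg hy0]; exact hy1) (n := 3) (by norm_num)
    have hsum : ∑ m ∈ range 3, y ^ m / (m.factorial : ℝ) = 1 + y + y^2/2 := by
      simp [Finset.sum_range_succ]
    rw [hsum, abs_of_nonneg hy0] at hb
    have : |Real.exp y - (1 + y + y^2/2)| ≤ y^3 * (2/9) := by
      convert hb using 2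
      norm_num [Nat.factorial]
    have h := abs_le.mp this
    linarith [h.2]
  -- step 5 : polynomial
  have s5 : 1 + y + y^2/2 + (2/9)*y^3 ≤ (kr+1)/kr := by
    have e1 : y + y^2/2 + (2/9)*y^3
        = (18*(3*kr+1)*(3*kr*(kr+1))^2 + 9*(3*kr+1)^2*(3*kr*(kr+1)) + 4*(3*kr+1)^3)
          / (18*(3*kr*(kr+1))^3) := by
      rw [hy]; field_simp; ring
    have e2 : (kr+1)/kr = 1 + 1/kr := by field_simp
    rw [e2]
    have : y + y^2/2 + (2/9)*y^3 ≤ 1/kr := by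
      rw [e1, div_le_div_iff₀ (by positivity) hkpos]
      nlinarith [sq_nonneg kr, sq_nonneg (kr-2), hk2, hkpos]
    linarith
  calc (1 + 1/(kr*(kr+1)))^k * Real.exp (1/(3*kr*(kr+1)))
      ≤ Real.exp (1/(kr+1)) * Real.exp (1/(3*kr*(kr+1))) := by
        apply mul_le_mul_of_nonneg_right s1 (le_of_lt (Real.exp_pos _))
    _ = Real.exp y := by rw [← Real.exp_add, hydef]
    _ ≤ 1 + y + y^2/2 + (2/9)*y^3 := s4
    _ ≤ (kr+1)/kr := s5

private lemma chernoff_count {ι : Type*} [Fintype ι] [DecidableEq ι]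
    (k : ℕ) (hk : 2 ≤ k) (D : Finset ι) (i : Fin (k+1)) :
    (((univ : Finset (ι → Fin (k+1))).filter
        (fun ω => D.card / k < (D.filter (fun e => ω e = i)).card)).card : ℝ)
      ≤ Real.exp (-(D.card : ℝ) / (3*(k:ℝ)^2*((k:ℝ)+1))) * ((k:ℝ)+1) ^ (Fintype.card ι) := by
  classical
  set kr := (k:ℝ) with hkrdef
  have hk2 : (2:ℝ) ≤ kr := by rw [hkrdef]; exact_mod_cast hk
  have hkpos : (0:ℝ) < kr := by linarith
  set lam : ℝ := (kr+1)/kr with hlam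
  have hlam1 : 1 ≤ lam := by
    rw [hlam, le_div_iff₀ hkpos]; linarith
  have hlampos : 0 < lam := by linarith
  set d := D.card with hd
  set t := d / k with ht
  set m := t + 1 with hm
  set N := Fintype.card ι with hNdef
  set cnt : (ι → Fin (k+1)) → ℕ := fun ω => (D.filter (fun e => ω e = i)).card with hcnt
  -- moment identity
  have moment : ∑ ω ∈ (univ : Finset (ι → Fin (k+1))), lam ^ (cnt ω)
      = (lam + kr) ^ d * (kr+1) ^ (N - d) := by
    have step1 : ∀ ω : ι → Fin (k+1), lam ^ cnt ω
        = ∏ e ∈ (univ : Finset ι),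
            (if e ∈ D then (if ω e = i then lam else 1) else 1) := by
      intro ω
      rw [prod_ite_mem univ D (fun e => if ω e = i then lam else 1), univ_inter,
        prod_ite (fun _ => lam) (fun _ => 1)]
      simp [hcnt, prod_const]
    have step2 := Finset.prod_univ_sum (fun _ : ι => (univ : Finset (Fin (k+1))))
      (fun e a => if e ∈ D then (if a = i then lam else 1) else 1)
    rw [Fintype.piFinset_univ] at step2
    have hsum : ∀ e : ι, (∑ a ∈ (univ : Finset (Fin (k+1))),
        (if e ∈ D then (if a = i then lam else 1) else 1))
        = if e ∈ D then lam + kr else kr + 1 := by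
      intro e
      by_cases he : e ∈ D <;> simp only [he, if_true, if_false]
      · have h1 : ∀ a : Fin (k+1), (if a = i then lam else 1)
            = (if a = i then lam - 1 else 0) + 1 := by
          intro a; split <;> ring
        rw [Finset.sum_congr rfl (fun a _ => h1 a), Finset.sum_add_distrib,
          Finset.sum_ite_eq' univ i (fun _ => lam - 1)]
        simp [Finset.card_univ, hkrdef]
        try ring
      · simp [Finset.card_univ, hkrdef]
        try ring
    calc ∑ ω ∈ (univ : Finset (ι → Fin (k+1))), lam ^ (cnt ω)
        = ∑ ω ∈ (univ : Finset (ι → Fin (k+1))), ∏ e ∈ (univ : Finset ι),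
            (if e ∈ D then (if ω e = i then lam else 1) else 1) :=
          Finset.sum_congr rfl (fun ω _ => step1 ω)
      _ = ∏ e ∈ (univ : Finset ι), ∑ a ∈ (univ : Finset (Fin (k+1))),
            (if e ∈ D then (if a = i then lam else 1) else 1) := step2.symm
      _ = ∏ e ∈ (univ : Finset ι), (if e ∈ D then lam + kr else kr + 1) :=
          Finset.prod_congr rfl (fun e _ => hsum e)
      _ = (lam + kr) ^ d * (kr+1) ^ (N - d) := by
          rw [prod_ite (fun _ => lam + kr) (fun _ => kr + 1)]
          simp only [prod_const]
          congr 2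
          · rw [filter_univ_mem]
          · rw [Finset.filter_not, filter_univ_mem, card_sdiff_of_subset (subset_univ D),
              Finset.card_univ]
  -- tail bound
  have hlampow : ∀ n : ℕ, (0:ℝ) ≤ lam ^ n := fun n => pow_nonneg (by linarith) n
  have tail : (((univ : Finset (ι → Fin (k+1))).filter (fun ω => t < cnt ω)).card : ℝ) * lam ^ m
      ≤ ∑ ω ∈ (univ : Finset (ι → Fin (k+1))), lam ^ (cnt ω) := by
    have h1 : (((univ : Finset (ι → Fin (k+1))).filter (fun ω => t < cnt ω)).card : ℝ) * lam ^ m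
        = ∑ _ω ∈ (univ : Finset (ι → Fin (k+1))).filter (fun ω => t < cnt ω), lam ^ m := by
      rw [sum_const, nsmul_eq_mul]
    rw [h1]
    calc ∑ ω ∈ (univ : Finset (ι → Fin (k+1))).filter (fun ω => t < cnt ω), lam ^ m
        ≤ ∑ ω ∈ (univ : Finset (ι → Fin (k+1))).filter (fun ω => t < cnt ω), lam ^ (cnt ω) := by
          apply sum_le_sum
          intro ω hω
          have hcω := (mem_filter.mp hω).2
          exact pow_le_pow_right₀ hlam1 (by omega)
      _ ≤ ∑ ω ∈ (univ : Finset (ι → Fin (k+1))), lam ^ (cnt ω) :=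
          sum_le_sum_of_subset_of_nonneg (filter_subset _ _) (fun ω _ _ => hlampow _)
  -- analytic comparison
  set x0 : ℝ := 1/(3*kr^2*(kr+1)) with hx0def
  have hx0pos : 0 < x0 := by rw [hx0def]; positivity
  have hdN : d ≤ N := by
    rw [hd, hNdef, ← Finset.card_univ]
    exact card_le_card (subset_univ D)
  have hdk : d ≤ k * m := by
    have h1 := Nat.div_add_mod d k
    have h2 : d % k < k := Nat.mod_lt _ (by omega)
    have hm' : m = d / k + 1 := by rw [hm, ht]
    rw [hm', Nat.mul_add, Nat.mul_one]
    omega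
  have hKpos : (0:ℝ) < kr*(kr+1) := by positivity
  set B : ℝ := (1 + 1/(kr*(kr+1))) * Real.exp x0 with hB
  have hB1 : 1 ≤ B := by
    have hq1 : (1:ℝ) ≤ 1 + 1/(kr*(kr+1)) := by
      have : (0:ℝ) < 1/(kr*(kr+1)) := by positivity
      linarith
    have hq2 := Real.one_le_exp (le_of_lt hx0pos)
    nlinarith
  have hBk : B ^ k ≤ lam := by
    rw [hB, mul_pow, ← Real.exp_nat_mul]
    have he : (k:ℝ) * x0 = 1/(3*kr*(kr+1)) := by
      rw [hx0def, hkrdef]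
      field_simp
    rw [he, hlam]
    exact core_ineq k hk
  have hBd : B ^ d ≤ lam ^ m :=
    calc B ^ d ≤ B ^ (k * m) := pow_le_pow_right₀ hB1 hdk
      _ = (B ^ k) ^ m := by rw [pow_mul]
      _ ≤ lam ^ m := pow_le_pow_left₀ (by positivity) hBk m
  have hmain : (lam + kr) ^ d * (kr+1) ^ (N - d)
      ≤ Real.exp (-(d:ℝ) * x0) * (kr+1) ^ N * lam ^ m := by
    have hsplit : ((kr+1:ℝ)) ^ N = (kr+1) ^ (N - d) * (kr+1) ^ d := by
      rw [← pow_add]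
      congr 1
      omega
    have hlk : lam + kr = (kr+1) * (1 + 1/(kr*(kr+1))) := by
      rw [hlam]; field_simp; ring
    have hexp : ((1 + 1/(kr*(kr+1))) : ℝ) ^ d * Real.exp ((d:ℝ) * x0) = B ^ d := by
      rw [hB, mul_pow, ← Real.exp_nat_mul]
    have h1 : ((1 + 1/(kr*(kr+1))):ℝ)^d * Real.exp ((d:ℝ)*x0) ≤ lam ^ m := by
      rw [hexp]; exact hBd
    have hepos : 0 < Real.exp ((d:ℝ) * x0) := Real.exp_pos _
    have hexpneg : Real.exp (-(d:ℝ) * x0) = (Real.exp ((d:ℝ)*x0))⁻¹ := by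
      rw [← Real.exp_neg]
      ring_nf
    calc (lam + kr) ^ d * (kr+1) ^ (N - d)
        = (1 + 1/(kr*(kr+1)))^d * ((kr+1)^(N-d) * (kr+1)^d) := by
          rw [hlk, mul_pow]; ring
      _ = (1 + 1/(kr*(kr+1)))^d * (kr+1)^N := by rw [← hsplit]
      _ ≤ (lam ^ m / Real.exp ((d:ℝ)*x0)) * (kr+1)^N := by
          have h2 : ((1 + 1/(kr*(kr+1))):ℝ)^d ≤ lam ^ m / Real.exp ((d:ℝ)*x0) := by
            rw [le_div_iff₀ hepos]; exact h1
          apply mul_le_mul_of_nonneg_right h2 (by positivity)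
      _ = Real.exp (-(d:ℝ)*x0) * (kr+1) ^ N * lam ^ m := by
          rw [hexpneg]
          field_simp
  have hfinal : (((univ : Finset (ι → Fin (k+1))).filter (fun ω => t < cnt ω)).card : ℝ) * lam ^ m
      ≤ (Real.exp (-(d:ℝ)*x0) * (kr+1) ^ N) * lam ^ m := by
    calc (((univ : Finset (ι → Fin (k+1))).filter (fun ω => t < cnt ω)).card : ℝ) * lam ^ m
        ≤ ∑ ω ∈ (univ : Finset (ι → Fin (k+1))), lam ^ (cnt ω) := tail
      _ = (lam + kr) ^ d * (kr+1) ^ (N - d) := moment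
      _ ≤ Real.exp (-(d:ℝ) * x0) * (kr+1) ^ N * lam ^ m := hmain
      _ = (Real.exp (-(d:ℝ)*x0) * (kr+1) ^ N) * lam ^ m := by ring
  have hres := le_of_mul_le_mul_right hfinal (by positivity : (0:ℝ) < lam ^ m)
  have hrw : -(d:ℝ)/(3*kr^2*(kr+1)) = -(d:ℝ) * x0 := by
    rw [hx0def]; ring
  rw [hrw]
  exact hres

private lemma one_sub_ge (t : ℝ) (ht0 : 0 ≤ t) (ht : t ≤ 1/2) :
    Real.exp (-2*t) ≤ 1 - t := by
  have hE := Real.add_one_le_exp t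
  have hEpos := Real.exp_pos t
  have hprod : Real.exp (-2*t) * (Real.exp t)^2 = 1 := by
    rw [← Real.exp_nat_mul]
    rw [← Real.exp_add]
    norm_num
  by_contra hcon
  push_neg at hcon
  have hApos : 0 < Real.exp (-2*t) := Real.exp_pos _
  have hsq : (1+t)^2 ≤ (Real.exp t)^2 := by nlinarith
  have hup : Real.exp (-2*t) * (1+t)^2 ≤ 1 := by nlinarith
  have h1t : (0:ℝ) < (1+t)^2 := by positivity
  have hq := mul_lt_mul_of_pos_right hcon h1t
  have ha : t*t ≤ t*(1/2) := mul_le_mul_of_nonneg_left ht ht0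
  have hb : t*(t*t) ≤ t*(t*(1/2)) := mul_le_mul_of_nonneg_left ha ht0
  nlinarith [ha, hb]


set_option maxHeartbeats 4000000 in
/-- Probabilistic threshold theorem: if `δ` satisfies the two Lovász-Local-Lemma
inequalities, then every rank-`r` hypergraph with minimum degree at least `δ`
admits a `(1/k)`-majority `(k+1)`-edge-colouring. -/
theorem majority_colouring_threshold (V : Type) [Fintype V] [DecidableEq V]
    (E : Finset (Finset V)) (r k δ : ℕ) (hk : 2 ≤ k) (hr : 2 ≤ r) (hδpos : 0 < δ)
    (h1 : 4 * ((k : ℝ) + 1) * Real.exp (-(δ : ℝ) / (3 * (k : ℝ) ^ 2 * ((k : ℝ) + 1))) ≤ 1)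
    (h2 : 8 * ((k : ℝ) + 1) * ((r : ℝ) - 1) *
        Real.exp (-(δ : ℝ) / (3 * (k : ℝ) ^ 2 * ((k : ℝ) + 1))) * (δ : ℝ) ≤ 1)
    (hE : ∀ e ∈ E, e.Nonempty ∧ e.card ≤ r)
    (hmin : ∀ v : V, δ ≤ (E.filter (fun e => v ∈ e)).card) :
    ∃ c : Finset V → Fin (k + 1),
      ∀ (v : V) (i : Fin (k + 1)),
        (E.filter (fun e => v ∈ e ∧ c e = i)).card
          ≤ (E.filter (fun e => v ∈ e)).card / k := by
  classical
  have hk2 : (2:ℝ) ≤ (k:ℝ) := by exact_mod_cast hk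
  have hr2 : (2:ℝ) ≤ (r:ℝ) := by exact_mod_cast hr
  have hδpos' : (0:ℝ) < (δ:ℝ) := by exact_mod_cast hδpos
  set x0 : ℝ := 1/(3*(k:ℝ)^2*((k:ℝ)+1)) with hx0def
  have hx0pos : 0 < x0 := by rw [hx0def]; positivity
  set q : ℝ := Real.exp (-(δ:ℝ) * x0) with hqdef
  have hqpos : 0 < q := Real.exp_pos _
  have hqeq : Real.exp (-(δ:ℝ)/(3*(k:ℝ)^2*((k:ℝ)+1))) = q := by
    rw [hqdef, hx0def]; congr 1; ring
  rw [hqeq] at h1 h2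
  have hq12 : q ≤ 1/12 := by nlinarith
  have hexp1 : Real.exp 1 < 2.7182818286 := Real.exp_one_lt_d9
  have hexp1' : (1:ℝ) ≤ Real.exp 1 := by
    have := Real.add_one_le_exp (1:ℝ); linarith [Real.exp_pos 1]
  have hδx0 : 2 ≤ (δ:ℝ) * x0 := by
    by_contra hcon
    push_neg at hcon
    have hlt : Real.exp (-2) < q := by
      rw [hqdef]
      apply Real.exp_lt_exp.mpr
      linarith
    have he2 : Real.exp 2 < 12 := by
      have e2 : Real.exp 2 = Real.exp 1 * Real.exp 1 := by
        rw [← Real.exp_add]; norm_num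
      nlinarith
    have hgt : (1:ℝ)/12 < Real.exp (-2) := by
      rw [Real.exp_neg]
      rw [lt_inv_comm₀ (by norm_num) (Real.exp_pos 2)]
      linarith
    linarith
  have hx0le : x0 ≤ 1/36 := by
    rw [hx0def]
    rw [div_le_div_iff₀ (by positivity) (by norm_num)]
    nlinarith
  have hδ3 : (3:ℝ) ≤ (δ:ℝ) := by nlinarith
  set c : ℝ := 8*((k:ℝ)+1)*((r:ℝ)-1)*q with hcdef
  have hr1 : (1:ℝ) ≤ (r:ℝ)-1 := by linarith
  have hcpos : 0 < c := by rw [hcdef]; positivity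
  have hcδ : c * (δ:ℝ) ≤ 1 := h2
  have hcx0 : c < x0 := by
    have h3 : c * (δ:ℝ) < x0 * (δ:ℝ) := by nlinarith
    exact lt_of_mul_lt_mul_right h3 (le_of_lt hδpos')
  -- the probability space: colourings of edges (as subtype of E)
  set dR : V → ℝ := fun v => ((E.filter (fun e => v ∈ e)).card : ℝ) with hdRdef
  have hdeg : ∀ v, (δ:ℝ) ≤ dR v := by
    intro v; simp only [hdRdef]; exact_mod_cast hmin v
  have hdeg3 : ∀ v, (3:ℝ) ≤ dR v := fun v => le_trans hδ3 (hdeg v)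
  have hdegpos : ∀ v, 0 < dR v := fun v => lt_of_lt_of_le (by norm_num) (hdeg3 v)
  set D : V → Finset {e : Finset V // e ∈ E} :=
    fun v => univ.filter (fun e => v ∈ e.1) with hDdef
  have hDcardN : ∀ v, (D v).card = (E.filter (fun e => v ∈ e)).card := by
    intro v
    simp only [hDdef]
    apply Finset.card_bij (fun (e : {e : Finset V // e ∈ E}) _ => (e.1 : Finset V))
    · intro a ha; rw [mem_filter] at ha ⊢; exact ⟨a.2, ha.2⟩
    · intro a _ b _ hab; exact Subtype.ext hab
    · intro b hb; rw [mem_filter] at hb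
      exact ⟨⟨b, hb.1⟩, mem_filter.mpr ⟨mem_univ _, hb.2⟩, rfl⟩
  have hDcard : ∀ v, ((D v).card : ℝ) = dR v := by
    intro v; simp only [hdRdef]; exact_mod_cast congrArg (Nat.cast (R := ℝ)) (hDcardN v)
  set A : V × Fin (k+1) → Finset ({e : Finset V // e ∈ E} → Fin (k+1)) :=
    fun vi => univ.filter
      (fun ω => (D vi.1).card / k < ((D vi.1).filter (fun e => ω e = vi.2)).card) with hAdef
  set xw : V × Fin (k+1) → ℝ := fun vi => Real.exp ((c - x0) * dR vi.1) with hxwdef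
  have hxwpos : ∀ vi, 0 < xw vi := fun vi => Real.exp_pos _
  set μ : ℝ := Real.exp ((c - x0) * (δ:ℝ)) with hμdef
  have hμpos : 0 < μ := Real.exp_pos _
  have hxwμ : ∀ vi, xw vi ≤ μ := by
    intro vi
    simp only [hxwdef, hμdef]
    apply Real.exp_le_exp.mpr
    exact mul_le_mul_of_nonpos_left (hdeg vi.1) (by linarith : c - x0 ≤ 0)
  have hμe : μ ≤ q * Real.exp 1 := by
    rw [hμdef, hqdef]
    have : (c - x0) * (δ:ℝ) = c * (δ:ℝ) + (-(δ:ℝ) * x0) := by ring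
    rw [this, Real.exp_add, mul_comm]
    apply mul_le_mul_of_nonneg_left (Real.exp_le_exp.mpr hcδ) (le_of_lt (Real.exp_pos _))
  have hμhalf : μ ≤ 1/2 := by
    have hqe : q * Real.exp 1 ≤ (1/12) * Real.exp 1 :=
      mul_le_mul_of_nonneg_right hq12 (le_of_lt (Real.exp_pos 1))
    linarith
  have hcondU : ∀ dv S : ℝ, 3 ≤ dv → S ≤ (((r:ℝ)-1)*dv+1)*μ →
      2*(((k:ℝ)+1)*S) ≤ c*dv := by
    intro dv S hdv hS
    have hX3 : 3 ≤ ((r:ℝ)-1)*dv := by nlinarith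
    have hA1 : (0:ℝ) ≤ ((r:ℝ)-1)*dv+1 := by nlinarith
    have hs1 : S ≤ (((r:ℝ)-1)*dv+1)*(q*Real.exp 1) :=
      le_trans hS (mul_le_mul_of_nonneg_left hμe hA1)
    have hkey : 2*(((r:ℝ)-1)*dv+1)*Real.exp 1 ≤ 8*(((r:ℝ)-1)*dv) := by
      have hXe : (((r:ℝ)-1)*dv)*Real.exp 1 ≤ (((r:ℝ)-1)*dv)*2.7182818286 :=
        mul_le_mul_of_nonneg_left (le_of_lt hexp1) (by linarith)
      nlinarith
    have h2 : 2*(((k:ℝ)+1)*S) ≤ 2*(((k:ℝ)+1)*((((r:ℝ)-1)*dv+1)*(q*Real.exp 1))) := by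
      nlinarith
    have h3 : 2*(((k:ℝ)+1)*((((r:ℝ)-1)*dv+1)*(q*Real.exp 1))) ≤ c*dv := by
      rw [hcdef]
      have h4 := mul_le_mul_of_nonneg_left hkey
        (mul_nonneg (by linarith : (0:ℝ) ≤ (k:ℝ)+1) (le_of_lt hqpos))
      nlinarith
    linarith
  have hxwhalf : ∀ vi, xw vi ≤ 1/2 := fun vi => le_trans (hxwμ vi) hμhalf
  have hxw1 : ∀ vi, xw vi < 1 := fun vi => lt_of_le_of_lt (hxwhalf vi) (by norm_num)
  have hxw0 : ∀ vi, 0 ≤ xw vi := fun vi => le_of_lt (hxwpos vi)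
  -- determination
  have hdet : ∀ (j : V × Fin (k+1)) (ω ω' : {e : Finset V // e ∈ E} → Fin (k+1)),
      (∀ t ∈ D j.1, ω t = ω' t) → ω ∈ A j → ω' ∈ A j := by
    intro j ω ω' hag hmem
    rw [hAdef, mem_filter] at hmem ⊢
    refine ⟨mem_univ _, ?_⟩
    have heq : (D j.1).filter (fun e => ω' e = j.2)
        = (D j.1).filter (fun e => ω e = j.2) := by
      apply filter_congr
      intro e he
      rw [hag e he]
    rw [heq]
    exact hmem.2
  -- neighbourhood bound
  have hNv : ∀ v : V, (((E.filter (fun e => v ∈ e)).biUnion id).card : ℝ)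
      ≤ ((r:ℝ)-1) * dR v + 1 := by
    intro v
    have hsub : (E.filter (fun e => v ∈ e)).biUnion id
        ⊆ insert v ((E.filter (fun e => v ∈ e)).biUnion (fun e => e.erase v)) := by
      intro u hu
      rw [mem_biUnion] at hu
      obtain ⟨e, he, hue⟩ := hu
      by_cases huv : u = v
      · subst huv; exact mem_insert_self _ _
      · exact mem_insert_of_mem (mem_biUnion.mpr ⟨e, he, mem_erase.mpr ⟨huv, hue⟩⟩)
    have hbound : ((E.filter (fun e => v ∈ e)).biUnion (fun e => e.erase v)).card
        ≤ (E.filter (fun e => v ∈ e)).card * (r - 1) := by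
      calc ((E.filter (fun e => v ∈ e)).biUnion (fun e => e.erase v)).card
          ≤ ∑ e ∈ E.filter (fun e => v ∈ e), (e.erase v).card := card_biUnion_le
        _ ≤ (E.filter (fun e => v ∈ e)).card * (r-1) := by
            have := Finset.sum_le_card_nsmul (E.filter (fun e => v ∈ e))
              (fun e => (e.erase v).card) (r-1) (by
                intro e he
                show (e.erase v).card ≤ r - 1
                rw [mem_filter] at he
                have h1 := (hE e he.1).2
                have h2 := card_erase_of_mem he.2
                omega)
            simpa [smul_eq_mul] using this
    have hchain : ((E.filter (fun e => v ∈ e)).biUnion id).card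
        ≤ (E.filter (fun e => v ∈ e)).card * (r-1) + 1 := by
      have h3 := card_le_card hsub
      have h4 := card_insert_le v ((E.filter (fun e => v ∈ e)).biUnion (fun e => e.erase v))
      omega
    have hcast : (((E.filter (fun e => v ∈ e)).biUnion id).card : ℝ)
        ≤ ((E.filter (fun e => v ∈ e)).card : ℝ) * ((r:ℝ)-1) + 1 := by
      have hr1' : (1:ℕ) ≤ r := by omega
      have := (Nat.cast_le (α := ℝ)).mpr hchain
      push_cast [Nat.cast_sub hr1'] at this
      convert this using 2
    simp only [hdRdef]
    calc (((E.filter (fun e => v ∈ e)).biUnion id).card : ℝ)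
        ≤ ((E.filter (fun e => v ∈ e)).card : ℝ) * ((r:ℝ)-1) + 1 := hcast
      _ = ((r:ℝ)-1) * ((E.filter (fun e => v ∈ e)).card : ℝ) + 1 := by ring
  -- the LLL condition
  have hP : ∀ j : V × Fin (k+1), ((A j).card : ℝ)
      ≤ xw j * (∏ l ∈ univ.filter
            (fun l => l ≠ j ∧ ¬ Disjoint (D l.1) (D j.1)), (1 - xw l))
        * (Fintype.card ({e : Finset V // e ∈ E} → Fin (k+1)) : ℝ) := by
    intro j
    obtain ⟨v, i⟩ := j
    set Γv : Finset (V × Fin (k+1)) := univ.filter (fun l : V × Fin (k+1) =>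
      l ≠ (v, i) ∧ ¬ Disjoint (D l.1) (D (v, i).1)) with hΓvdef
    have hch := chernoff_count k hk (D v) i
    have hAc : ((A (v, i)).card : ℝ)
        ≤ Real.exp (-(((D v).card) : ℝ) / (3*(k:ℝ)^2*((k:ℝ)+1)))
          * ((k:ℝ)+1) ^ (Fintype.card {e : Finset V // e ∈ E}) := by
      simp only [hAdef]
      exact hch
    have harg : -(((D v).card) : ℝ) / (3*(k:ℝ)^2*((k:ℝ)+1)) = -(dR v) * x0 := by
      rw [hDcard v, hx0def]; ring
    rw [harg] at hAc
    set G : Finset (V × Fin (k+1)) :=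
      ((E.filter (fun e => v ∈ e)).biUnion id) ×ˢ (univ : Finset (Fin (k+1))) with hGdef
    have hΓG : Γv ⊆ G := by
      intro l hl
      rw [hΓvdef, mem_filter] at hl
      obtain ⟨e, he1, he2⟩ := not_disjoint_iff.mp hl.2.2
      simp only [hDdef, mem_filter] at he1 he2
      rw [hGdef, mem_product]
      refine ⟨?_, mem_univ _⟩
      apply mem_biUnion.mpr
      exact ⟨e.1, mem_filter.mpr ⟨e.2, he2.2⟩, by simpa using he1.2⟩
    have hprodle : ∏ l ∈ G, (1 - xw l) ≤ ∏ l ∈ Γv, (1 - xw l) := by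
      rw [← prod_sdiff hΓG]
      have hle1 : (∏ l ∈ G \ Γv, (1 - xw l)) ≤ 1 :=
        prod_le_one (fun l _ => sub_nonneg.mpr (le_of_lt (hxw1 l)))
          (fun l _ => sub_le_self 1 (hxw0 l))
      have hge0 : (0:ℝ) ≤ ∏ l ∈ Γv, (1 - xw l) :=
        prod_nonneg (fun l _ => sub_nonneg.mpr (le_of_lt (hxw1 l)))
      calc (∏ l ∈ G \ Γv, (1 - xw l)) * ∏ l ∈ Γv, (1 - xw l)
          ≤ 1 * ∏ l ∈ Γv, (1 - xw l) := mul_le_mul_of_nonneg_right hle1 hge0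
        _ = ∏ l ∈ Γv, (1 - xw l) := one_mul _
    have hsum : ∑ l ∈ G, xw l
        = ((k:ℝ)+1) * ∑ u ∈ (E.filter (fun e => v ∈ e)).biUnion id,
            Real.exp ((c - x0) * dR u) := by
      rw [hGdef, Finset.sum_product]
      simp only [hxwdef]
      have hinner : ∀ u : V, (∑ _j' ∈ (univ : Finset (Fin (k+1))),
          Real.exp ((c - x0) * dR u)) = ((k:ℝ)+1) * Real.exp ((c - x0) * dR u) := by
        intro u
        rw [sum_const, card_univ, Fintype.card_fin, nsmul_eq_mul]
        push_cast
        ring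
      rw [Finset.sum_congr rfl (fun u _ => hinner u), ← Finset.mul_sum]
    have hSU : ∑ u ∈ (E.filter (fun e => v ∈ e)).biUnion id, Real.exp ((c - x0) * dR u)
        ≤ (((r:ℝ)-1) * dR v + 1) * μ := by
      calc ∑ u ∈ (E.filter (fun e => v ∈ e)).biUnion id, Real.exp ((c - x0) * dR u)
          ≤ (((E.filter (fun e => v ∈ e)).biUnion id).card) • μ := by
            apply Finset.sum_le_card_nsmul
            intro u _
            exact hxwμ (u, i)
        _ = (((E.filter (fun e => v ∈ e)).biUnion id).card : ℝ) * μ := nsmul_eq_mul _ _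
        _ ≤ (((r:ℝ)-1) * dR v + 1) * μ :=
            mul_le_mul_of_nonneg_right (hNv v) (le_of_lt hμpos)
    have hfinalsum : 2 * ∑ l ∈ G, xw l ≤ c * dR v := by
      rw [hsum]
      exact hcondU (dR v) _ (hdeg3 v) hSU
    have hprodG : Real.exp (-(c * dR v)) ≤ ∏ l ∈ G, (1 - xw l) := by
      calc Real.exp (-(c * dR v))
          ≤ Real.exp (∑ l ∈ G, (-2 * xw l)) := by
            apply Real.exp_le_exp.mpr
            have : ∑ l ∈ G, (-2 * xw l) = -2 * ∑ l ∈ G, xw l := by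
              rw [← Finset.mul_sum]
            rw [this]
            linarith [hfinalsum]
        _ = ∏ l ∈ G, Real.exp (-2 * xw l) := Real.exp_sum G _
        _ ≤ ∏ l ∈ G, (1 - xw l) :=
            prod_le_prod (fun l _ => le_of_lt (Real.exp_pos _))
              (fun l _ => one_sub_ge (xw l) (hxw0 l) (hxwhalf l))
    have hxwj : xw (v,i) = Real.exp ((c - x0) * dR v) := by simp [hxwdef]
    have hN' : (Fintype.card ({e : Finset V // e ∈ E} → Fin (k+1)) : ℝ)
        = ((k:ℝ)+1) ^ (Fintype.card {e : Finset V // e ∈ E}) := by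
      rw [Fintype.card_fun, Fintype.card_fin]
      push_cast
      ring
    have hexpos := Real.exp_pos ((c - x0) * dR v)
    have hexple : Real.exp (-(dR v) * x0) ≤ xw (v,i) * ∏ l ∈ Γv, (1 - xw l) := by
      calc Real.exp (-(dR v) * x0)
          = Real.exp ((c - x0) * dR v) * Real.exp (-(c * dR v)) := by
            rw [← Real.exp_add]; congr 1; ring
        _ ≤ Real.exp ((c - x0) * dR v) * ∏ l ∈ G, (1 - xw l) :=
            mul_le_mul_of_nonneg_left hprodG (le_of_lt hexpos)
        _ ≤ Real.exp ((c - x0) * dR v) * ∏ l ∈ Γv, (1 - xw l) :=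
            mul_le_mul_of_nonneg_left hprodle (le_of_lt hexpos)
        _ = xw (v,i) * ∏ l ∈ Γv, (1 - xw l) := by
            rw [hxwj]
    calc ((A (v,i)).card : ℝ)
        ≤ Real.exp (-(dR v) * x0) * ((k:ℝ)+1) ^ (Fintype.card {e : Finset V // e ∈ E}) := hAc
      _ ≤ (xw (v,i) * ∏ l ∈ Γv, (1 - xw l))
            * ((k:ℝ)+1) ^ (Fintype.card {e : Finset V // e ∈ E}) :=
          mul_le_mul_of_nonneg_right hexple (by positivity)
      _ = xw (v,i) * (∏ l ∈ Γv, (1 - xw l))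
            * (Fintype.card ({e : Finset V // e ∈ E} → Fin (k+1)) : ℝ) := by
          rw [hN']
  -- apply the local lemma
  obtain ⟨ω, hω⟩ := LLL_count A (fun vi => D vi.1) hdet xw hxw0 hxw1 hP
  refine ⟨fun s => if h : s ∈ E then ω ⟨s, h⟩ else ⟨0, Nat.succ_pos k⟩, ?_⟩
  intro v i
  have hnot := hω (v, i)
  simp only [hAdef, mem_filter, mem_univ, true_and, not_lt] at hnot
  have hL : (E.filter (fun s => v ∈ s ∧
      (if h : s ∈ E then ω ⟨s, h⟩ else ⟨0, Nat.succ_pos k⟩) = i)).card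
      = ((D v).filter (fun e => ω e = i)).card := by
    symm
    apply Finset.card_bij (fun (e : {e : Finset V // e ∈ E}) _ => (e.1 : Finset V))
    · intro a ha
      rw [mem_filter] at ha
      have ha1 : v ∈ a.1 := by
        have := ha.1
        simp only [hDdef, mem_filter] at this
        exact this.2
      rw [mem_filter]
      refine ⟨a.2, ha1, ?_⟩
      rw [dif_pos a.2]
      simpa using ha.2
    · intro a _ b _ hab
      exact Subtype.ext hab
    · intro b hb
      rw [mem_filter] at hb
      refine ⟨⟨b, hb.1⟩, ?_, rfl⟩
      rw [mem_filter]
      constructor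
      · simp only [hDdef, mem_filter]
        exact ⟨mem_univ _, hb.2.1⟩
      · have := hb.2.2
        rw [dif_pos hb.1] at this
        exact this
  rw [hL, ← hDcardN v]
  exact hnot
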